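/- (Theorem 3) Let N ≥ 2 and let A(t) = (a_{ij}(t)), t ≥ 0, be a family of irreducible N×N matrices satisfying Condition A1, all having the same normalized positive left eigenvector ξ corresponding to eigenvalue 0; set Ξ = diag(ξ). Suppose there is λ < 0 such that for every t the largest nonzero eigenvalue λ_2(t) of Ξ A(t) + A(t)^T Ξ satisfies λ_2(t) ≤ λ. Let Γ = diag(γ_1,…,γ_n) be positive definite and suppose f ∈ QUAD(Δ,ϖ) with ϖ > 0. Let α > 0 and let x_1,…,x_N : [0,∞) → ℝ^n and c : [0,∞) → ℝ be differentiable functions satisfying, for all t ≥ 0, ẋ_i(t) = f(x_i(t),t) + c(t) Σ_{j≠i} a_{ij}(t) Γ (x_j(t) − x_i(t)), ċ(t) = −(α/2) Σ_{i,j} ξ_i a_{ij}(t) x_i(t)^T Γ x_j(t), and c(0) = 0. Then ‖x_i(t) − x_j(t)‖ → 0 as t → ∞ for all i, j, and c(t) converges to a finite limit. -/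

import Mathlib

open Matrix Filter Set MeasureTheory

section stmt14Helpers

private lemma stmt14_sum_sq_le_sq {N : ℕ} (ξ : Fin N → ℝ) (h : ∀ i, 0 ≤ ξ i) :
    ∑ i, ξ i ^ 2 ≤ (∑ i, ξ i) ^ 2 := by
  rw [sq, Finset.sum_mul_sum, ← Finset.sum_product']
  have hsub := Finset.sum_le_sum_of_subset_of_nonneg
    (s := (Finset.univ.diag))
    (t := (Finset.univ : Finset (Fin N)) ×ˢ (Finset.univ : Finset (Fin N)))
    (f := fun p => ξ p.1 * ξ p.2) (by intro p hp; simp)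
    (fun p _ _ => mul_nonneg (h _) (h _))
  calc ∑ i, ξ i ^ 2 = ∑ p ∈ Finset.univ.diag, ξ p.1 * ξ p.2 := by
        rw [Finset.sum_diag]; simp [sq]
    _ ≤ _ := hsub

private lemma stmt14_specLemma {N : ℕ} (hN : 2 ≤ N) (ξ : Fin N → ℝ) (hξpos : ∀ i, 0 < ξ i)
    (hξsum : ∑ i, ξ i = 1) (B : Matrix (Fin N) (Fin N) ℝ)
    (hrow : ∀ i, ∑ j, B i j = 0) (hcol : ∀ j, ∑ i, ξ i * B i j = 0)
    (lam : ℝ) (hlam : lam < 0)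
    (hspec : ∀ v : Fin N → ℝ, (∑ i, v i) = 0 →
      ∑ i, v i * ∑ j, (ξ i * B i j + B j i * ξ j) * v j ≤ lam * ∑ i, (v i) ^ 2)
    (v : Fin N → ℝ) (hv : ∑ i, ξ i * v i = 0) :
    ∑ i, ∑ j, ξ i * B i j * v i * v j ≤ lam / (2 * (1 + N)) * ∑ i, (v i) ^ 2 := by
  have hNpos : (0:ℝ) < N := by positivity
  set s : ℝ := (∑ i, v i) / N with hs
  set w : Fin N → ℝ := fun i => v i - s with hw
  have hsumw : ∑ i, w i = 0 := by
    simp only [hw, Finset.sum_sub_distrib, Finset.sum_const, Finset.card_univ,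
      Fintype.card_fin, nsmul_eq_mul, hs]
    field_simp
    ring
  have hXeq : ∑ i, ∑ j, ξ i * B i j * v i * v j = ∑ i, ∑ j, ξ i * B i j * w i * w j := by
    have expand : ∀ i j, ξ i * B i j * v i * v j
        = ξ i * B i j * w i * w j + (s * w i + s * s) * (ξ i * B i j) + s * (ξ i * B i j * w j) := by
      intro i j
      have h1 : v i = w i + s := by simp [hw]
      have hj : v j = w j + s := by simp [hw]
      rw [h1, hj]; ring
    simp only [expand, Finset.sum_add_distrib]
    have h1 : ∑ i, ∑ j, (s * w i + s * s) * (ξ i * B i j) = 0 := by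
      apply Finset.sum_eq_zero; intro i _
      rw [← Finset.mul_sum, ← Finset.mul_sum, hrow]; ring
    have h2 : ∑ i, ∑ j, s * (ξ i * B i j * w j) = 0 := by
      rw [Finset.sum_comm]
      apply Finset.sum_eq_zero; intro j _
      have : ∑ i, s * (ξ i * B i j * w j) = s * w j * ∑ i, ξ i * B i j := by
        rw [Finset.mul_sum]; apply Finset.sum_congr rfl; intro i _; ring
      rw [this, hcol]; ring
    rw [h1, h2]; ring
  have hspecw := hspec w hsumw
  have h2X : ∑ i, w i * ∑ j, (ξ i * B i j + B j i * ξ j) * w j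
      = 2 * ∑ i, ∑ j, ξ i * B i j * w i * w j := by
    have hrw : ∀ i, w i * ∑ j, (ξ i * B i j + B j i * ξ j) * w j
        = ∑ j, (ξ i * B i j * w i * w j + B j i * ξ j * w i * w j) := by
      intro i; rw [Finset.mul_sum]; apply Finset.sum_congr rfl; intro j _; ring
    simp only [hrw, Finset.sum_add_distrib]
    have hsw : ∑ i, ∑ j, B j i * ξ j * w i * w j = ∑ i, ∑ j, ξ i * B i j * w i * w j := by
      rw [Finset.sum_comm]; apply Finset.sum_congr rfl; intro i _
      apply Finset.sum_congr rfl; intro j _; ring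
    rw [hsw]; ring
  have hsval : s = - ∑ i, ξ i * w i := by
    have hh : ∑ i, ξ i * v i = ∑ i, ξ i * w i + s := by
      simp only [hw, mul_sub]
      rw [Finset.sum_sub_distrib]
      have : ∑ i, ξ i * s = s := by
        rw [← Finset.sum_mul, hξsum, one_mul]
      rw [this]; ring
    rw [hv] at hh; linarith
  have hs2 : s ^ 2 ≤ ∑ i, (w i) ^ 2 := by
    have hcs := Finset.sum_mul_sq_le_sq_mul_sq Finset.univ ξ w
    have hξ2 : ∑ i, ξ i ^ 2 ≤ 1 := by
      have := stmt14_sum_sq_le_sq ξ (fun i => (hξpos i).le)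
      rwa [hξsum, one_pow] at this
    have hseq : s ^ 2 = (∑ i, ξ i * w i) ^ 2 := by rw [hsval]; ring
    rw [hseq]
    calc (∑ i, ξ i * w i) ^ 2 ≤ (∑ i, ξ i ^ 2) * ∑ i, (w i) ^ 2 := hcs
      _ ≤ 1 * ∑ i, (w i) ^ 2 := by
          apply mul_le_mul_of_nonneg_right hξ2
          exact Finset.sum_nonneg fun i _ => sq_nonneg _
      _ = _ := one_mul _
  have hnorm : ∑ i, (v i) ^ 2 ≤ (1 + N) * ∑ i, (w i) ^ 2 := by
    have hvw : ∑ i, (v i) ^ 2 = ∑ i, (w i) ^ 2 + N * s ^ 2 := by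
      have hexp : ∀ i, (v i) ^ 2 = (w i) ^ 2 + 2 * s * w i + s ^ 2 := by
        intro i; have : v i = w i + s := by simp [hw]
        rw [this]; ring
      simp only [hexp, Finset.sum_add_distrib, Finset.sum_const, Finset.card_univ,
        Fintype.card_fin, nsmul_eq_mul, ← Finset.mul_sum, hsumw]
      ring
    have hNs : (N:ℝ) * s ^ 2 ≤ N * ∑ i, (w i)^2 :=
      mul_le_mul_of_nonneg_left hs2 hNpos.le
    rw [hvw]; linarith
  have hfin : lam * ∑ i, (w i) ^ 2 ≤ lam / (1 + N) * ∑ i, (v i) ^ 2 := by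
    rw [div_mul_eq_mul_div, le_div_iff₀ (by positivity)]
    calc lam * (∑ i, (w i)^2) * (1 + N) = lam * ((1 + N) * ∑ i, (w i)^2) := by ring
      _ ≤ lam * ∑ i, (v i)^2 := mul_le_mul_of_nonpos_left hnorm hlam.le
  rw [hXeq]
  rw [h2X] at hspecw
  have h2 : 2 * ∑ i, ∑ j, ξ i * B i j * w i * w j ≤ lam / (1 + N) * ∑ i, (v i)^2 :=
    le_trans hspecw hfin
  have heq : lam / (2 * (1+(N:ℝ))) = (lam / (1+(N:ℝ))) / 2 := by
    rw [div_div]; ring_nf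
  rw [heq]
  linarith

private lemma stmt14_antiOn_Ici {g g' : ℝ → ℝ} (h : ∀ t, 0 ≤ t → HasDerivAt g (g' t) t)
    (h' : ∀ t, 0 < t → g' t ≤ 0) : AntitoneOn g (Set.Ici 0) := by
  apply antitoneOn_of_deriv_nonpos (convex_Ici 0)
  · exact fun t ht => (h t ht).continuousAt.continuousWithinAt
  · intro t ht; rw [interior_Ici] at ht
    exact ((h t (le_of_lt ht)).differentiableAt).differentiableWithinAt
  · intro t ht; rw [interior_Ici] at ht
    rw [(h t ht.le).deriv]; exact h' t ht

private lemma stmt14_monoOn_Ici {g g' : ℝ → ℝ} (h : ∀ t, 0 ≤ t → HasDerivAt g (g' t) t)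
    (h' : ∀ t, 0 < t → 0 ≤ g' t) : MonotoneOn g (Set.Ici 0) := by
  apply monotoneOn_of_deriv_nonneg (convex_Ici 0)
  · exact fun t ht => (h t ht).continuousAt.continuousWithinAt
  · intro t ht; rw [interior_Ici] at ht
    exact ((h t (le_of_lt ht)).differentiableAt).differentiableWithinAt
  · intro t ht; rw [interior_Ici] at ht
    rw [(h t ht.le).deriv]; exact h' t ht

private lemma stmt14_antiOn_Icc {g g' : ℝ → ℝ} {b : ℝ} (hcont : ContinuousOn g (Set.Icc 0 b))
    (h : ∀ t ∈ Set.Ioo (0:ℝ) b, HasDerivAt g (g' t) t)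
    (h' : ∀ t ∈ Set.Ioo (0:ℝ) b, g' t ≤ 0) : AntitoneOn g (Set.Icc 0 b) := by
  apply antitoneOn_of_deriv_nonpos (convex_Icc 0 b) hcont
  · intro t ht; rw [interior_Icc] at ht
    exact ((h t ht).differentiableAt).differentiableWithinAt
  · intro t ht; rw [interior_Icc] at ht
    rw [(h t ht).deriv]; exact h' t ht

private lemma stmt14_tendsto_of_monoOn_bdd {g : ℝ → ℝ} (hmono : MonotoneOn g (Set.Ici 0))
    {Cb : ℝ} (hbdd : ∀ t, 0 ≤ t → g t ≤ Cb) : ∃ L, Tendsto g atTop (nhds L) := by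
  set g2 : ℝ → ℝ := fun t => g (max t 0) with hg2
  have hmono2 : Monotone g2 := fun s t hst =>
    hmono (le_max_right s 0) (le_max_right t 0) (max_le_max hst le_rfl)
  have hbdd2 : BddAbove (Set.range g2) := by
    refine ⟨Cb, ?_⟩; rintro _ ⟨t, rfl⟩; exact hbdd _ (le_max_right t 0)
  refine ⟨⨆ t, g2 t, ?_⟩
  apply (tendsto_atTop_ciSup hmono2 hbdd2).congr'
  filter_upwards [eventually_ge_atTop (0:ℝ)] with t ht
  simp [hg2, max_eq_left ht]

private lemma stmt14_quadform_reduce {N : ℕ} (ξ : Fin N → ℝ) (B : Matrix (Fin N) (Fin N) ℝ)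
    (hrow : ∀ i, ∑ j, B i j = 0) (hcol : ∀ j, ∑ i, ξ i * B i j = 0)
    (u : Fin N → ℝ) (s : ℝ) :
    ∑ i, ∑ j, ξ i * B i j * (u i + s) * (u j + s)
      = ∑ i, ∑ j, ξ i * B i j * u i * u j := by
  have expand : ∀ i j, ξ i * B i j * (u i + s) * (u j + s)
      = ξ i * B i j * u i * u j + (s * u i + s * s) * (ξ i * B i j) + s * (ξ i * B i j * u j) :=
    fun i j => by ring
  simp only [expand, Finset.sum_add_distrib]
  have h1 : ∑ i, ∑ j, (s * u i + s * s) * (ξ i * B i j) = 0 := by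
    apply Finset.sum_eq_zero; intro i _
    rw [← Finset.mul_sum, ← Finset.mul_sum, hrow]; ring
  have h2 : ∑ i, ∑ j, s * (ξ i * B i j * u j) = 0 := by
    rw [Finset.sum_comm]
    apply Finset.sum_eq_zero; intro j _
    have : ∑ i, s * (ξ i * B i j * u j) = s * u j * ∑ i, ξ i * B i j := by
      rw [Finset.mul_sum]; apply Finset.sum_congr rfl; intro i _; ring
    rw [this, hcol]; ring
  rw [h1, h2]; ring

private lemma stmt14_tendsto_zero_of_int_bdd {W : ℝ → ℝ} {K I : ℝ} (hK : 0 ≤ K)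
    (hWnn : ∀ t, 0 ≤ t → 0 ≤ W t)
    (hcont : ContinuousOn W (Set.Ici 0))
    (hgron : ∀ s t : ℝ, 0 ≤ s → s ≤ t → W t ≤ W s * Real.exp (K * (t - s)))
    (hint : ∀ b : ℝ, 0 ≤ b → (∫ s in (0:ℝ)..b, W s) ≤ I) :
    Tendsto W atTop (nhds 0) := by
  set F : ℝ → ℝ := fun T => ∫ s in (0:ℝ)..T, W s with hF
  have hWib : ∀ a b : ℝ, 0 ≤ a → 0 ≤ b → IntervalIntegrable W MeasureTheory.volume a b := by
    intro a b ha hb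
    apply ContinuousOn.intervalIntegrable
    apply hcont.mono
    intro z hz
    rcases le_total a b with h | h
    · rw [Set.uIcc_of_le h] at hz; exact le_trans ha hz.1
    · rw [Set.uIcc_of_ge h] at hz; exact le_trans hb hz.1
  have hFmono : MonotoneOn F (Set.Ici 0) := by
    intro s hs t ht hst
    have heq : F t - F s = ∫ u in s..t, W u := by
      rw [hF,
        ← intervalIntegral.integral_interval_sub_left (hWib 0 t le_rfl ht) (hWib 0 s le_rfl hs)]
    have hnn : 0 ≤ ∫ u in s..t, W u :=
      intervalIntegral.integral_nonneg hst (fun z hz => hWnn z (le_trans hs hz.1))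
    linarith
  obtain ⟨L, hL⟩ := stmt14_tendsto_of_monoOn_bdd hFmono (fun t ht => hint t ht)
  rw [Metric.tendsto_atTop]
  intro ε hε
  set η : ℝ := ε * Real.exp (-K) with hη
  have hηpos : 0 < η := by positivity
  have hcauchy : ∀ᶠ t in atTop, |F t - L| < η / 3 := by
    obtain ⟨T, hT⟩ := Metric.tendsto_atTop.1 hL (η/3) (by positivity)
    filter_upwards [eventually_ge_atTop T] with t ht
    simpa [Real.dist_eq] using hT t ht
  obtain ⟨T, hT⟩ := hcauchy.exists_forall_of_atTop
  refine ⟨max T 1 + 1, ?_⟩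
  intro t ht
  have ht1 : 1 ≤ t - 1 := by linarith [le_max_right T (1:ℝ)]
  have htpos : (0:ℝ) ≤ t - 1 := by linarith
  have htT : T ≤ t - 1 := by linarith [le_max_left T (1:ℝ)]
  rw [Real.dist_eq, sub_zero, abs_of_nonneg (hWnn t (by linarith))]
  by_contra hcon
  push_neg at hcon
  have hlow : ∀ s ∈ Set.Icc (t-1) t, ε * Real.exp (-K) ≤ W s := by
    intro s hs
    have h1 := hgron s t (by linarith [hs.1]) hs.2
    have hts : t - s ≤ 1 := by linarith [hs.1]
    have hexp : Real.exp (K * (t - s)) ≤ Real.exp K := by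
      apply Real.exp_le_exp.2
      nlinarith [hs.2]
    have hWs : 0 ≤ W s := hWnn s (by linarith [hs.1])
    have hkey : ε ≤ W s * Real.exp K :=
      calc ε ≤ W t := hcon
        _ ≤ W s * Real.exp (K * (t - s)) := h1
        _ ≤ W s * Real.exp K := mul_le_mul_of_nonneg_left hexp hWs
    calc ε * Real.exp (-K) ≤ (W s * Real.exp K) * Real.exp (-K) :=
          mul_le_mul_of_nonneg_right hkey (Real.exp_nonneg _)
      _ = W s := by rw [mul_assoc, ← Real.exp_add]; simp
  have hintlow : η ≤ F t - F (t-1) := by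
    have heq : F t - F (t-1) = ∫ u in (t-1)..t, W u := by
      rw [hF,
        ← intervalIntegral.integral_interval_sub_left (hWib 0 t le_rfl (by linarith))
          (hWib 0 (t-1) le_rfl htpos)]
    rw [heq]
    have hconst : ∫ _u in (t-1)..t, η = η := by
      rw [intervalIntegral.integral_const]; simp
    rw [← hconst]
    exact intervalIntegral.integral_mono_on (by linarith)
      intervalIntegrable_const (hWib (t-1) t htpos (by linarith)) (fun z hz => hlow z hz)
  have h1 := hT t (by linarith)
  have h2 := hT (t-1) htT
  cases' abs_lt.1 h1 with h1a h1b
  cases' abs_lt.1 h2 with h2a h2b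
  linarith

end stmt14Helpers

set_option maxHeartbeats 1000000 in
theorem stmt14 (N n : ℕ) (hN : 2 ≤ N) (A : ℝ → Matrix (Fin N) (Fin N) ℝ)
    (hoff : ∀ t : ℝ, 0 ≤ t → ∀ i j, i ≠ j → 0 ≤ A t i j)
    (hdiag : ∀ t : ℝ, 0 ≤ t → ∀ i, A t i i = -∑ j ∈ Finset.univ.erase i, A t i j)
    (hirr : ∀ t : ℝ, 0 ≤ t → ∀ S : Finset (Fin N), S.Nonempty → S ≠ Finset.univ →
      ∃ i ∈ S, ∃ j, j ∉ S ∧ A t i j ≠ 0)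
    (ξ : Fin N → ℝ) (hξpos : ∀ i, 0 < ξ i) (hξsum : ∑ i, ξ i = 1)
    (hξeig : ∀ t : ℝ, 0 ≤ t → Matrix.vecMul ξ (A t) = 0)
    (lam : ℝ) (hlam : lam < 0)
    (hspec : ∀ t : ℝ, 0 ≤ t → ∀ v : Fin N → ℝ, (∑ i, v i) = 0 →
      v ⬝ᵥ (Matrix.of fun i j => ξ i * A t i j + A t j i * ξ j).mulVec v
        ≤ lam * ∑ i, (v i) ^ 2)
    (γ : Fin n → ℝ) (hγ : ∀ k, 0 < γ k)
    (δ : Fin n → ℝ) (ϖ : ℝ) (hϖ : 0 < ϖ)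
    (f : (Fin n → ℝ) → ℝ → (Fin n → ℝ))
    (hf : Continuous fun p : (Fin n → ℝ) × ℝ => f p.1 p.2)
    (hQUAD : ∀ x y : Fin n → ℝ, ∀ t : ℝ, 0 ≤ t →
      (∑ k, (x k - y k) * (f x t k - f y t k)) - (∑ k, δ k * (x k - y k) ^ 2)
        ≤ -ϖ * ∑ k, (x k - y k) ^ 2)
    (α : ℝ) (hα : 0 < α)
    (x : Fin N → ℝ → (Fin n → ℝ)) (c : ℝ → ℝ) (hc0 : c 0 = 0)
    (hODE : ∀ i, ∀ t : ℝ, 0 ≤ t →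
      HasDerivAt (x i)
        (fun k => f (x i t) t k
          + c t * ∑ j ∈ Finset.univ.erase i, A t i j * (γ k * (x j t k - x i t k))) t)
    (hcODE : ∀ t : ℝ, 0 ≤ t →
      HasDerivAt c
        (-(α / 2) * ∑ i, ∑ j, ξ i * A t i j * ∑ k, x i t k * γ k * x j t k) t) :
    (∀ i j, Tendsto (fun t => ‖x i t - x j t‖) atTop (nhds 0)) ∧
    ∃ c₀ : ℝ, Tendsto c atTop (nhds c₀) := by
  by_cases hn : n = 0
  · -- degenerate case: state space is trivial
    subst hn
    constructor
    · intro i j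
      have hz : (fun t => ‖x i t - x j t‖) = fun _ => 0 := by
        funext t
        have h0 : x i t - x j t = 0 := Subsingleton.elim _ _
        rw [h0, norm_zero]
      rw [hz]; exact tendsto_const_nhds
    · refine ⟨0, ?_⟩
      have hder : ∀ t : ℝ, 0 ≤ t → HasDerivAt c 0 t := by
        intro t ht
        simpa using hcODE t ht
      have hconst : ∀ t : ℝ, 0 ≤ t → c t = 0 := by
        intro t ht
        have hcc := constant_of_has_deriv_right_zero (f := c) (a := 0) (b := t)
          (fun s hs => ((hder s hs.1).continuousAt).continuousWithinAt)
          (fun s hs => ((hder s hs.1).hasDerivWithinAt))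
        have := hcc t (Set.mem_Icc.2 ⟨ht, le_rfl⟩)
        rw [this, hc0]
      apply Tendsto.congr' _ (tendsto_const_nhds (x := (0:ℝ)))
      filter_upwards [eventually_ge_atTop (0:ℝ)] with t ht
      exact (hconst t ht).symm
  -- main case n > 0
  have hn0 : 0 < n := Nat.pos_of_ne_zero hn
  have hNpos : (0:ℝ) < N := by
    have : (0:ℕ) < N := by omega
    exact_mod_cast this
  -- basic matrix facts
  have hrowA : ∀ t : ℝ, 0 ≤ t → ∀ i, ∑ j, A t i j = 0 := by
    intro t ht i
    have h := hdiag t ht i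
    have h2 : ∑ j, A t i j = A t i i + ∑ j ∈ Finset.univ.erase i, A t i j :=
      (Finset.add_sum_erase _ _ (Finset.mem_univ i)).symm
    rw [h2, h]; ring
  have hcolA : ∀ t : ℝ, 0 ≤ t → ∀ j, ∑ i, ξ i * A t i j = 0 := by
    intro t ht j
    simpa [Matrix.vecMul, dotProduct] using congrFun (hξeig t ht) j
  have hspec' : ∀ t : ℝ, 0 ≤ t → ∀ v : Fin N → ℝ, (∑ i, v i) = 0 →
      ∑ i, v i * ∑ j, (ξ i * A t i j + A t j i * ξ j) * v j ≤ lam * ∑ i, (v i)^2 := by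
    intro t ht v hv
    simpa [dotProduct, Matrix.mulVec] using hspec t ht v hv
  -- constants
  set β : ℝ := -lam / (2 * (1 + N)) with hβdef
  have hβ : 0 < β := div_pos (by linarith) (by positivity)
  have huniv : (Finset.univ : Finset (Fin n)).Nonempty := ⟨⟨0, hn0⟩, Finset.mem_univ _⟩
  set γ0 : ℝ := Finset.univ.inf' huniv γ with hγ0def
  have hγ0pos : 0 < γ0 := by
    rw [hγ0def, Finset.lt_inf'_iff]
    exact fun k _ => hγ k
  have hγ0le : ∀ k, γ0 ≤ γ k := fun k => Finset.inf'_le _ (Finset.mem_univ k)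
  set D : ℝ := ∑ k, |δ k| with hDdef
  have hD : 0 ≤ D := Finset.sum_nonneg fun k _ => abs_nonneg _
  have hDk : ∀ k, δ k ≤ D := by
    intro k
    calc δ k ≤ |δ k| := le_abs_self _
      _ ≤ D := Finset.single_le_sum (fun j _ => abs_nonneg (δ j)) (Finset.mem_univ k)
  set m : ℝ := D / (β * γ0) with hmdef
  have hm : 0 ≤ m := div_nonneg hD (by positivity)
  set K : ℝ := 2 * D with hKdef
  have hK : 0 ≤ K := by positivity
  -- main objects
  set xb : ℝ → Fin n → ℝ := fun t k => ∑ j, ξ j * x j t k with hxbdef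
  set e : Fin N → ℝ → Fin n → ℝ := fun i t k => x i t k - xb t k with hedef
  set W : ℝ → ℝ := fun t => ∑ i, ξ i * ∑ k, (e i t k)^2 with hWdef
  set Em : ℝ → ℝ := fun t => ∑ i, ∑ k, (e i t k)^2 with hEmdef
  set q : ℝ → ℝ := fun t => ∑ k, γ k * ∑ i, ∑ j, ξ i * A t i j * e i t k * e j t k with hqdef
  set vel : Fin N → ℝ → Fin n → ℝ := fun i t k => f (x i t) t k
    + c t * ∑ j ∈ Finset.univ.erase i, A t i j * (γ k * (x j t k - x i t k)) with hveldef
  set W' : ℝ → ℝ := fun t =>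
    ∑ i, ξ i * ∑ k, (2 * e i t k * (vel i t k - ∑ j, ξ j * vel j t k)) with hW'def
  -- basic positivity
  have hξle1 : ∀ i, ξ i ≤ 1 := by
    intro i
    rw [← hξsum]
    exact Finset.single_le_sum (fun j _ => (hξpos j).le) (Finset.mem_univ i)
  have hSnn : ∀ i t, 0 ≤ ∑ k, (e i t k)^2 := fun i t => Finset.sum_nonneg fun k _ => sq_nonneg _
  have hWnn : ∀ t, 0 ≤ W t :=
    fun t => Finset.sum_nonneg fun i _ => mul_nonneg (hξpos i).le (hSnn i t)
  have hEmnn : ∀ t, 0 ≤ Em t := fun t => Finset.sum_nonneg fun i _ => hSnn i t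
  have hWleEm : ∀ t, W t ≤ Em t := by
    intro t
    apply Finset.sum_le_sum
    intro i _
    calc ξ i * ∑ k, (e i t k)^2 ≤ 1 * ∑ k, (e i t k)^2 :=
          mul_le_mul_of_nonneg_right (hξle1 i) (hSnn i t)
      _ = _ := one_mul _
  have hesum : ∀ t k, ∑ i, ξ i * e i t k = 0 := by
    intro t k
    simp only [hedef, mul_sub]
    rw [Finset.sum_sub_distrib, ← Finset.sum_mul, hξsum, one_mul]
    simp [hxbdef]
  -- derivatives of components
  have hxk : ∀ i (k : Fin n) (t : ℝ), 0 ≤ t → HasDerivAt (fun s => x i s k) (vel i t k) t := by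
    intro i k t ht
    exact (hasDerivAt_pi.1 (hODE i t ht)) k
  have hxbk : ∀ (k : Fin n) (t : ℝ), 0 ≤ t →
      HasDerivAt (fun s => xb s k) (∑ j, ξ j * vel j t k) t := by
    intro k t ht
    exact HasDerivAt.fun_sum (fun j _ => (hxk j k t ht).const_mul (ξ j))
  have hek : ∀ i (k : Fin n) (t : ℝ), 0 ≤ t →
      HasDerivAt (fun s => e i s k) (vel i t k - ∑ j, ξ j * vel j t k) t := by
    intro i k t ht
    exact (hxk i k t ht).sub (hxbk k t ht)
  have hWd : ∀ t : ℝ, 0 ≤ t → HasDerivAt W (W' t) t := by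
    intro t ht
    apply HasDerivAt.fun_sum
    intro i _
    apply HasDerivAt.const_mul
    apply HasDerivAt.fun_sum
    intro k _
    have h2 := (hek i k t ht).fun_pow 2
    simpa using h2
  have hWcont : ContinuousOn W (Set.Ici 0) :=
    fun t ht => ((hWd t ht).continuousAt).continuousWithinAt
  -- spectral bound on q
  have hqk : ∀ t : ℝ, 0 ≤ t → ∀ k, ∑ i, ∑ j, ξ i * A t i j * e i t k * e j t k
      ≤ -β * ∑ i, (e i t k)^2 := by
    intro t ht k
    have hsl := stmt14_specLemma hN ξ hξpos hξsum (A t) (hrowA t ht) (hcolA t ht) lam hlam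
      (hspec' t ht) (fun i => e i t k) (hesum t k)
    have hβeq : -β = lam / (2*(1+(N:ℝ))) := by rw [hβdef]; ring
    rw [hβeq]
    exact hsl
  have hqle : ∀ t : ℝ, 0 ≤ t → q t ≤ -(β * γ0) * Em t := by
    intro t ht
    have hterm : ∀ k, γ k * ∑ i, ∑ j, ξ i * A t i j * e i t k * e j t k
        ≤ -(β*γ0) * ∑ i, (e i t k)^2 := by
      intro k
      have h1 := hqk t ht k
      have hS : 0 ≤ ∑ i, (e i t k)^2 := Finset.sum_nonneg fun i _ => sq_nonneg _
      nlinarith [mul_le_mul_of_nonneg_left h1 (hγ k).le,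
        mul_le_mul_of_nonneg_right (hγ0le k) (mul_nonneg hβ.le hS)]
    calc q t ≤ ∑ k, -(β*γ0) * ∑ i, (e i t k)^2 := Finset.sum_le_sum (fun k _ => hterm k)
      _ = -(β*γ0) * ∑ k, ∑ i, (e i t k)^2 := by rw [Finset.mul_sum]
      _ = -(β*γ0) * Em t := by
          simp only [hEmdef]
          rw [Finset.sum_comm]
  have hqnp : ∀ t : ℝ, 0 ≤ t → q t ≤ 0 := by
    intro t ht
    calc q t ≤ -(β * γ0) * Em t := hqle t ht
      _ ≤ 0 := mul_nonpos_of_nonpos_of_nonneg (by nlinarith) (hEmnn t)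
  -- derivative of c
  have hsum_swap : ∀ t : ℝ, 0 ≤ t →
      (∑ i, ∑ j, ξ i * A t i j * ∑ k, x i t k * γ k * x j t k) = q t := by
    intro t ht
    have hxe : ∀ i k, x i t k = e i t k + xb t k := by
      intro i k; simp [hedef]
    calc ∑ i, ∑ j, ξ i * A t i j * ∑ k, x i t k * γ k * x j t k
        = ∑ i, ∑ j, ∑ k, γ k * (ξ i * A t i j * x i t k * x j t k) := by
          apply Finset.sum_congr rfl; intro i _
          apply Finset.sum_congr rfl; intro j _
          rw [Finset.mul_sum]
          exact Finset.sum_congr rfl fun k _ => by ring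
      _ = ∑ i, ∑ k, ∑ j, γ k * (ξ i * A t i j * x i t k * x j t k) := by
          exact Finset.sum_congr rfl fun i _ => Finset.sum_comm
      _ = ∑ k, ∑ i, ∑ j, γ k * (ξ i * A t i j * x i t k * x j t k) := Finset.sum_comm
      _ = ∑ k, γ k * ∑ i, ∑ j, ξ i * A t i j * x i t k * x j t k := by
          apply Finset.sum_congr rfl; intro k _
          rw [Finset.mul_sum]
          exact Finset.sum_congr rfl fun i _ => by rw [Finset.mul_sum]
      _ = q t := by
          simp only [hqdef]
          apply Finset.sum_congr rfl; intro k _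
          congr 1
          calc ∑ i, ∑ j, ξ i * A t i j * x i t k * x j t k
              = ∑ i, ∑ j, ξ i * A t i j * (e i t k + xb t k) * (e j t k + xb t k) := by
                apply Finset.sum_congr rfl; intro i _
                apply Finset.sum_congr rfl; intro j _
                rw [← hxe i k, ← hxe j k]
            _ = ∑ i, ∑ j, ξ i * A t i j * e i t k * e j t k :=
                stmt14_quadform_reduce ξ (A t) (hrowA t ht) (hcolA t ht)
                  (fun i => e i t k) (xb t k)
  have hcd : ∀ t : ℝ, 0 ≤ t → HasDerivAt c (-(α/2) * q t) t := by
    intro t ht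
    have h := hcODE t ht
    rwa [hsum_swap t ht] at h
  have hc'nn : ∀ t : ℝ, 0 ≤ t → 0 ≤ -(α/2) * q t := by
    intro t ht
    have := hqnp t ht
    nlinarith
  have hc'ge : ∀ t : ℝ, 0 ≤ t → (α/2) * (β * γ0) * W t ≤ -(α/2) * q t := by
    intro t ht
    have h1 := hqle t ht
    have h2 := hWleEm t
    have h3 : (α/2) * q t ≤ (α/2) * (-(β*γ0) * Em t) :=
      mul_le_mul_of_nonneg_left h1 (by positivity)
    have h4 : (α/2)*(β*γ0)*W t ≤ (α/2)*(β*γ0)*Em t :=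
      mul_le_mul_of_nonneg_left h2 (by positivity)
    nlinarith
  have hcmono : MonotoneOn c (Set.Ici 0) :=
    stmt14_monoOn_Ici (fun t ht => hcd t ht) (fun t ht => hc'nn t ht.le)
  have hcnn : ∀ t : ℝ, 0 ≤ t → 0 ≤ c t := by
    intro t ht
    have := hcmono (Set.self_mem_Ici) ht ht
    rwa [hc0] at this
  -- QUAD bound
  have hFb : ∀ t : ℝ, 0 ≤ t →
      ∑ i, ξ i * ∑ k, e i t k * (f (x i t) t k - f (xb t) t k) ≤ (D - ϖ) * W t := by
    intro t ht
    have hper : ∀ i, ∑ k, e i t k * (f (x i t) t k - f (xb t) t k)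
        ≤ (D - ϖ) * ∑ k, (e i t k)^2 := by
      intro i
      have hq := hQUAD (x i t) (xb t) t ht
      have hxy : ∀ k, x i t k - xb t k = e i t k := fun k => rfl
      simp only [hxy] at hq
      have hδ : ∑ k, δ k * (e i t k)^2 ≤ D * ∑ k, (e i t k)^2 := by
        rw [Finset.mul_sum]
        exact Finset.sum_le_sum fun k _ => mul_le_mul_of_nonneg_right (hDk k) (sq_nonneg _)
      have hS := hSnn i t
      nlinarith [hq, hδ]
    calc ∑ i, ξ i * ∑ k, e i t k * (f (x i t) t k - f (xb t) t k)
        ≤ ∑ i, ξ i * ((D - ϖ) * ∑ k, (e i t k)^2) :=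
          Finset.sum_le_sum fun i _ => mul_le_mul_of_nonneg_left (hper i) (hξpos i).le
      _ = (D - ϖ) * W t := by
          simp only [hWdef]
          rw [Finset.mul_sum]
          exact Finset.sum_congr rfl fun i _ => by ring
  -- key derivative identity
  have hW'eq : ∀ t : ℝ, 0 ≤ t → W' t
      = 2 * (∑ i, ξ i * ∑ k, e i t k * (f (x i t) t k - f (xb t) t k)) + 2 * c t * q t := by
    intro t ht
    have hSik : ∀ (i : Fin N) (k : Fin n),
        (∑ j ∈ Finset.univ.erase i, A t i j * (γ k * (x j t k - x i t k)))
        = γ k * ∑ j, A t i j * e j t k := by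
      intro i k
      have h1 : (∑ j, A t i j * (γ k * (x j t k - x i t k)))
          = A t i i * (γ k * (x i t k - x i t k))
            + ∑ j ∈ Finset.univ.erase i, A t i j * (γ k * (x j t k - x i t k)) :=
        (Finset.add_sum_erase _ _ (Finset.mem_univ i)).symm
      have h2 : A t i i * (γ k * (x i t k - x i t k)) = 0 := by simp
      have h3 : (∑ j, A t i j * (γ k * (x j t k - x i t k)))
          = γ k * ∑ j, A t i j * e j t k := by
        have hterm : ∀ j, A t i j * (γ k * (x j t k - x i t k))
            = γ k * (A t i j * x j t k) - (γ k * x i t k) * A t i j := fun j => by ring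
        have hterm2 : ∀ j, A t i j * e j t k
            = A t i j * x j t k - xb t k * A t i j := by
          intro j; simp only [hedef]; ring
        simp only [hterm, hterm2, Finset.sum_sub_distrib, ← Finset.mul_sum]
        rw [hrowA t ht i]
        ring
      linarith [h1, h3]
    have hveleq : ∀ (i : Fin N) (k : Fin n), vel i t k
        = f (x i t) t k + c t * (γ k * ∑ j, A t i j * e j t k) := by
      intro i k
      simp only [hveldef]
      rw [hSik i k]
    -- the three auxiliary sums
    have haux1 : ∑ i, ξ i * ∑ k, (2 * e i t k * (∑ j, ξ j * vel j t k)) = 0 := by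
      calc ∑ i, ξ i * ∑ k, (2 * e i t k * (∑ j, ξ j * vel j t k))
          = ∑ i, ∑ k, (2 * (∑ j, ξ j * vel j t k)) * (ξ i * e i t k) := by
            apply Finset.sum_congr rfl; intro i _
            rw [Finset.mul_sum]
            exact Finset.sum_congr rfl fun k _ => by ring
        _ = ∑ k, ∑ i, (2 * (∑ j, ξ j * vel j t k)) * (ξ i * e i t k) := Finset.sum_comm
        _ = 0 := by
            apply Finset.sum_eq_zero; intro k _
            rw [← Finset.mul_sum, hesum t k, mul_zero]
    have haux2 : ∑ i, ξ i * ∑ k, (2 * e i t k * f (xb t) t k) = 0 := by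
      calc ∑ i, ξ i * ∑ k, (2 * e i t k * f (xb t) t k)
          = ∑ i, ∑ k, (2 * f (xb t) t k) * (ξ i * e i t k) := by
            apply Finset.sum_congr rfl; intro i _
            rw [Finset.mul_sum]
            exact Finset.sum_congr rfl fun k _ => by ring
        _ = ∑ k, ∑ i, (2 * f (xb t) t k) * (ξ i * e i t k) := Finset.sum_comm
        _ = 0 := by
            apply Finset.sum_eq_zero; intro k _
            rw [← Finset.mul_sum, hesum t k, mul_zero]
    have haux3 : ∑ i, ξ i * ∑ k, (2 * e i t k * (c t * (γ k * ∑ j, A t i j * e j t k)))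
        = 2 * c t * q t := by
      calc ∑ i, ξ i * ∑ k, (2 * e i t k * (c t * (γ k * ∑ j, A t i j * e j t k)))
          = ∑ i, ∑ k, ∑ j, (2 * c t * γ k) * (ξ i * A t i j * e i t k * e j t k) := by
            apply Finset.sum_congr rfl; intro i _
            rw [Finset.mul_sum]
            apply Finset.sum_congr rfl; intro k _
            rw [show ξ i * (2 * e i t k * (c t * (γ k * ∑ j, A t i j * e j t k)))
                = (2 * c t * γ k * (ξ i * e i t k)) * ∑ j, A t i j * e j t k from by ring]
            rw [Finset.mul_sum]
            exact Finset.sum_congr rfl fun j _ => by ring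
        _ = ∑ k, ∑ i, ∑ j, (2 * c t * γ k) * (ξ i * A t i j * e i t k * e j t k) :=
            Finset.sum_comm
        _ = 2 * c t * q t := by
            simp only [hqdef]
            rw [Finset.mul_sum]
            apply Finset.sum_congr rfl; intro k _
            rw [show 2 * c t * (γ k * ∑ i, ∑ j, ξ i * A t i j * e i t k * e j t k)
                = (2 * c t * γ k) * ∑ i, ∑ j, ξ i * A t i j * e i t k * e j t k from by ring]
            rw [Finset.mul_sum]
            apply Finset.sum_congr rfl; intro i _
            rw [Finset.mul_sum]
    -- expansion of W'
    have hA : W' t = (∑ i, ξ i * ∑ k, (2 * e i t k * f (x i t) t k))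
        + (∑ i, ξ i * ∑ k, (2 * e i t k * (c t * (γ k * ∑ j, A t i j * e j t k))))
        - (∑ i, ξ i * ∑ k, (2 * e i t k * (∑ j, ξ j * vel j t k))) := by
      simp only [hW'def]
      rw [← Finset.sum_add_distrib, ← Finset.sum_sub_distrib]
      apply Finset.sum_congr rfl
      intro i _
      rw [← mul_add, ← mul_sub, ← Finset.sum_add_distrib, ← Finset.sum_sub_distrib]
      congr 1
      apply Finset.sum_congr rfl
      intro k _
      rw [hveleq i k]
      ring
    -- f-part split
    have hsplit2 : 2 * (∑ i, ξ i * ∑ k, e i t k * (f (x i t) t k - f (xb t) t k))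
        = (∑ i, ξ i * ∑ k, (2 * e i t k * f (x i t) t k))
          - (∑ i, ξ i * ∑ k, (2 * e i t k * f (xb t) t k)) := by
      rw [← Finset.sum_sub_distrib, Finset.mul_sum]
      apply Finset.sum_congr rfl
      intro i _
      have h1 : ξ i * ∑ k, (2 * e i t k * f (x i t) t k)
          - ξ i * ∑ k, (2 * e i t k * f (xb t) t k)
          = ξ i * ∑ k, (2 * e i t k * f (x i t) t k - 2 * e i t k * f (xb t) t k) := by
        rw [← mul_sub, ← Finset.sum_sub_distrib]
      have h2 : ∑ k, (2 * e i t k * f (x i t) t k - 2 * e i t k * f (xb t) t k)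
          = ∑ k, 2 * (e i t k * (f (x i t) t k - f (xb t) t k)) :=
        Finset.sum_congr rfl fun k _ => by ring
      have h3 : ∑ k, 2 * (e i t k * (f (x i t) t k - f (xb t) t k))
          = 2 * ∑ k, e i t k * (f (x i t) t k - f (xb t) t k) := by
        rw [Finset.mul_sum]
      rw [h1, h2, h3]
      ring
    linarith [hA, haux1, haux2, haux3, hsplit2]
  have hW'le : ∀ t : ℝ, 0 ≤ t → W' t ≤ K * W t := by
    intro t ht
    rw [hW'eq t ht]
    have h1 := hFb t ht
    have h2 : 2 * c t * q t ≤ 0 :=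
      mul_nonpos_of_nonneg_of_nonpos (by nlinarith [hcnn t ht]) (hqnp t ht)
    have h3 := hWnn t
    rw [hKdef]
    nlinarith
  -- Lyapunov function
  set V : ℝ → ℝ := fun t => W t + (2/α) * (c t - m)^2 with hVdef
  set V' : ℝ → ℝ := fun t => W' t + (2/α) * (2 * (c t - m) * (-(α/2) * q t)) with hV'def
  have hVd : ∀ t : ℝ, 0 ≤ t → HasDerivAt V (V' t) t := by
    intro t ht
    apply (hWd t ht).add
    apply HasDerivAt.const_mul
    have := ((hcd t ht).sub_const m).fun_pow 2
    simpa using this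
  have hVnn : ∀ t, 0 ≤ V t := by
    intro t
    have := hWnn t
    have h2 : 0 ≤ (2/α) * (c t - m)^2 := by positivity
    simp only [hVdef]; linarith
  have hV'le : ∀ t : ℝ, 0 ≤ t → V' t ≤ -(2*ϖ) * W t := by
    intro t ht
    have h1 := hFb t ht
    have h2 := hqle t ht
    have h3 := hWleEm t
    have h4 := hWnn t
    have hmβ : m * (β * γ0) = D := by
      rw [hmdef]; field_simp
    have hcancel : (2/α) * (2 * (c t - m) * (-(α/2) * q t)) = -(2*(c t - m)*q t) := by
      field_simp
    have hcalc : V' t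
        = 2 * (∑ i, ξ i * ∑ k, e i t k * (f (x i t) t k - f (xb t) t k)) + 2 * m * q t := by
      simp only [hV'def]
      rw [hW'eq t ht, hcancel]
      ring
    rw [hcalc]
    have h5 : 2 * m * q t ≤ 2 * m * (-(β*γ0) * Em t) :=
      mul_le_mul_of_nonneg_left h2 (by positivity)
    have h6 : -(β*γ0) * Em t ≤ -(β*γ0) * W t := by
      nlinarith [mul_nonneg (mul_pos hβ hγ0pos).le (sub_nonneg.2 h3)]
    have h7 : 2 * m * (-(β*γ0) * Em t) ≤ 2 * m * (-(β*γ0) * W t) :=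
      mul_le_mul_of_nonneg_left h6 (by positivity)
    have h8 : 2 * m * (-(β*γ0) * W t) = -(2*D) * W t := by rw [← hmβ]; ring
    linarith
  -- V antitone, so V bounded, c bounded
  have hVant : AntitoneOn V (Set.Ici 0) :=
    stmt14_antiOn_Ici hVd (fun t ht => le_trans (hV'le t ht.le) (by nlinarith [hWnn t]))
  have hVle : ∀ t : ℝ, 0 ≤ t → V t ≤ V 0 := fun t ht => hVant Set.self_mem_Ici ht ht
  have hcbdd : ∀ t : ℝ, 0 ≤ t → c t ≤ m + Real.sqrt (α * V 0 / 2) := by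
    intro t ht
    have hVt : V t = W t + (2/α) * (c t - m)^2 := rfl
    have h1 : (2/α) * (c t - m)^2 ≤ V 0 := by
      have hv := hVle t ht
      have hw := hWnn t
      rw [hVt] at hv
      linarith
    have h2 : (c t - m)^2 ≤ α * V 0 / 2 := by
      rw [div_mul_eq_mul_div, div_le_iff₀ hα] at h1
      rw [le_div_iff₀ (by norm_num : (0:ℝ) < 2)]
      nlinarith
    have h3 : c t - m ≤ Real.sqrt (α * V 0 / 2) := by
      calc c t - m ≤ |c t - m| := le_abs_self _
        _ = Real.sqrt ((c t - m)^2) := (Real.sqrt_sq_eq_abs _).symm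
        _ ≤ Real.sqrt (α * V 0 / 2) := Real.sqrt_le_sqrt h2
    linarith
  have hcconv : ∃ c₀ : ℝ, Tendsto c atTop (nhds c₀) :=
    stmt14_tendsto_of_monoOn_bdd hcmono hcbdd
  -- integral bound
  have hWib : ∀ a b : ℝ, 0 ≤ a → 0 ≤ b → IntervalIntegrable W MeasureTheory.volume a b := by
    intro a b ha hb
    apply ContinuousOn.intervalIntegrable
    apply hWcont.mono
    intro z hz
    rcases le_total a b with h | h
    · rw [Set.uIcc_of_le h] at hz; exact le_trans ha hz.1
    · rw [Set.uIcc_of_ge h] at hz; exact le_trans hb hz.1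
  have hIbnd : ∀ b : ℝ, 0 ≤ b → (∫ s in (0:ℝ)..b, W s) ≤ V 0 / (2*ϖ) := by
    intro b hb
    rcases eq_or_lt_of_le hb with hb0 | hb'
    · rw [← hb0, intervalIntegral.integral_same]
      exact div_nonneg (hVnn 0) (by positivity)
    · set U : ℝ → ℝ := fun T => V T + (2*ϖ) * ∫ s in (0:ℝ)..T, W s with hUdef
      have hprim : ContinuousOn (fun T => ∫ s in (0:ℝ)..T, W s) (Set.Icc 0 b) := by
        have h := intervalIntegral.continuousOn_primitive_interval'
          (hWib 0 b le_rfl hb) (Set.left_mem_uIcc)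
        rwa [Set.uIcc_of_le hb] at h
      have hUcont : ContinuousOn U (Set.Icc 0 b) := by
        apply ContinuousOn.add
        · exact fun s hs => ((hVd s hs.1).continuousAt).continuousWithinAt
        · exact continuousOn_const.mul hprim
      have hUd : ∀ s ∈ Set.Ioo (0:ℝ) b, HasDerivAt U (V' s + (2*ϖ) * W s) s := by
        intro s hs
        apply (hVd s hs.1.le).add
        apply HasDerivAt.const_mul
        apply intervalIntegral.integral_hasDerivAt_right (hWib 0 s le_rfl hs.1.le)
        · apply AEStronglyMeasurable.stronglyMeasurableAtFilter_of_mem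
            (s := Set.Ioi (0:ℝ))
          · exact (hWcont.mono Set.Ioi_subset_Ici_self).aestronglyMeasurable
              measurableSet_Ioi
          · exact Ioi_mem_nhds hs.1
        · exact (hWd s hs.1.le).continuousAt
      have hU'le : ∀ s ∈ Set.Ioo (0:ℝ) b, V' s + (2*ϖ) * W s ≤ 0 := by
        intro s hs
        have := hV'le s hs.1.le
        have := hWnn s
        linarith
      have hanti := stmt14_antiOn_Icc hUcont hUd hU'le
      have hUb := hanti (Set.left_mem_Icc.2 hb) (Set.right_mem_Icc.2 hb) hb
      have hU0 : U 0 = V 0 := by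
        simp only [hUdef, intervalIntegral.integral_same, mul_zero, add_zero]
      rw [hU0] at hUb
      have hVb : 0 ≤ V b := hVnn b
      have hkey : (2*ϖ) * ∫ s in (0:ℝ)..b, W s ≤ V 0 := by
        simp only [hUdef] at hUb; linarith
      rw [le_div_iff₀ (by positivity)]
      linarith
  -- Gronwall
  have hgron : ∀ s t : ℝ, 0 ≤ s → s ≤ t → W t ≤ W s * Real.exp (K * (t - s)) := by
    have hgd : ∀ u : ℝ, 0 ≤ u → HasDerivAt (fun y => W y * Real.exp (-(K * y)))
        (W' u * Real.exp (-(K*u)) + W u * (Real.exp (-(K*u)) * -K)) u := by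
      intro u hu
      have hin : HasDerivAt (fun y : ℝ => -(K * y)) (-K) u := by
        simpa using ((hasDerivAt_id u).const_mul K).fun_neg
      exact (hWd u hu).mul hin.exp
    have hganti : AntitoneOn (fun y => W y * Real.exp (-(K * y))) (Set.Ici 0) := by
      apply stmt14_antiOn_Ici hgd
      intro u hu
      have h1 := hW'le u hu.le
      have h2 : (0:ℝ) ≤ Real.exp (-(K*u)) := (Real.exp_pos _).le
      nlinarith [mul_le_mul_of_nonneg_right h1 h2]
    intro s0 t0 hs0 hst
    have ht0 : (0:ℝ) ≤ t0 := hs0.trans hst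
    have key := hganti hs0 ht0 hst
    have hmul := mul_le_mul_of_nonneg_right key (Real.exp_nonneg (K * t0))
    calc W t0 = W t0 * (Real.exp (-(K*t0)) * Real.exp (K*t0)) := by
          rw [← Real.exp_add]; simp
      _ = (W t0 * Real.exp (-(K*t0))) * Real.exp (K*t0) := by ring
      _ ≤ (W s0 * Real.exp (-(K*s0))) * Real.exp (K*t0) := hmul
      _ = W s0 * Real.exp (K*(t0-s0)) := by
          rw [mul_assoc, ← Real.exp_add,
            show -(K*s0) + K*t0 = K*(t0-s0) from by ring]
  have hW0 : Tendsto W atTop (nhds 0) :=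
    stmt14_tendsto_zero_of_int_bdd hK (fun t _ => hWnn t) hWcont hgron hIbnd
  -- conclude
  refine ⟨?_, hcconv⟩
  have hSi : ∀ i, Tendsto (fun t => ∑ k, (e i t k)^2) atTop (nhds 0) := by
    intro i
    apply squeeze_zero (fun t => hSnn i t) (g := fun t => (ξ i)⁻¹ * W t)
    · intro t
      have hterm : ξ i * ∑ k, (e i t k)^2 ≤ W t :=
        Finset.single_le_sum (f := fun i => ξ i * ∑ k, (e i t k)^2)
          (fun j _ => mul_nonneg (hξpos j).le (hSnn j t)) (Finset.mem_univ i)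
      exact (le_inv_mul_iff₀ (hξpos i)).2 hterm
    · have := hW0.const_mul ((ξ i)⁻¹)
      simpa using this
  have hsqrt : ∀ i, Tendsto (fun t => Real.sqrt (∑ k, (e i t k)^2)) atTop (nhds 0) := by
    intro i
    have hcomp := (Real.continuous_sqrt.continuousAt (x := (0:ℝ))).tendsto.comp (hSi i)
    simpa [Real.sqrt_zero, Function.comp_def] using hcomp
  intro i j
  apply squeeze_zero (fun t => norm_nonneg _)
    (g := fun t => Real.sqrt (∑ k, (e i t k)^2) + Real.sqrt (∑ k, (e j t k)^2))
  · intro t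
    apply pi_norm_le_iff_of_nonneg (by positivity) |>.2
    intro k
    have hik : |e i t k| ≤ Real.sqrt (∑ k', (e i t k')^2) := by
      rw [← Real.sqrt_sq_eq_abs]
      exact Real.sqrt_le_sqrt (Finset.single_le_sum (f := fun k' => (e i t k')^2)
        (fun k' _ => sq_nonneg _) (Finset.mem_univ k))
    have hjk : |e j t k| ≤ Real.sqrt (∑ k', (e j t k')^2) := by
      rw [← Real.sqrt_sq_eq_abs]
      exact Real.sqrt_le_sqrt (Finset.single_le_sum (f := fun k' => (e j t k')^2)
        (fun k' _ => sq_nonneg _) (Finset.mem_univ k))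
    have hdiff : (x i t - x j t) k = e i t k - e j t k := by
      simp [hedef]
    rw [Real.norm_eq_abs, hdiff]
    calc |e i t k - e j t k| ≤ |e i t k| + |e j t k| := abs_sub _ _
      _ ≤ _ := add_le_add hik hjk
  · have := (hsqrt i).add (hsqrt j)
    simpa using this
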